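/- Let d ≥ 3 be an integer and let f ∈ C[x,y,z] be given by f = (xz)^m + y^{2m} if d = 2m is even (m ≥ 2) and by f = y·((xz)^m + y^{2m}) if d = 2m + 1 is odd (m ≥ 1). Then for every integer j with 1 ≤ j ≤ d − 3, the complex vector space { (a,b,c) ∈ AR(f)_j : a_x + b_y + c_z = 0 } has dimension ⌊(j+1)/2⌋. -/

import Mathlib

open MvPolynomial

/-- The ℂ-linear Jacobian map sending `(a,b,c)` to `a·f_x + b·f_y + c·f_z`. -/
noncomputable def jacC (f : MvPolynomial (Fin 3) ℂ) :
    (Fin 3 → MvPolynomial (Fin 3) ℂ) →ₗ[ℂ] MvPolynomial (Fin 3) ℂ where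
  toFun v := ∑ i, v i * pderiv i f
  map_add' a b := by simp [add_mul, Finset.sum_add_distrib]
  map_smul' c a := by simp [Finset.smul_sum, smul_mul_assoc]

/-- The ℂ-linear divergence map sending `(a,b,c)` to `a_x + b_y + c_z`. -/
noncomputable def divC :
    (Fin 3 → MvPolynomial (Fin 3) ℂ) →ₗ[ℂ] MvPolynomial (Fin 3) ℂ where
  toFun v := ∑ i, pderiv i (v i)
  map_add' a b := by simp [Finset.sum_add_distrib]
  map_smul' c a := by simp [Finset.smul_sum]

/-- The ℂ-vector space of Jacobian syzygies of `f` that are homogeneous of degree `j`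
and are annihilated by the divergence map. -/
noncomputable def V (f : MvPolynomial (Fin 3) ℂ) (j : ℕ) :
    Submodule ℂ (Fin 3 → MvPolynomial (Fin 3) ℂ) :=
  (Submodule.pi Set.univ fun _ => homogeneousSubmodule (Fin 3) ℂ j) ⊓
    LinearMap.ker (jacC f) ⊓ LinearMap.ker divC


open Finsupp

abbrev R3 := MvPolynomial (Fin 3) ℂ


lemma euler_coeff (i : Fin 3) (g : R3) (μ : Fin 3 →₀ ℕ) :
    coeff μ (X i * pderiv i g) = (μ i : ℂ) * coeff μ g := by
  induction g using MvPolynomial.induction_on' with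
  | add p q hp hq => simp only [map_add, mul_add, coeff_add, hp, hq, mul_add]
  | monomial s a =>
    rw [pderiv_monomial]
    by_cases h : s i = 0
    · simp only [h, Nat.cast_zero, mul_zero, map_zero, coeff_monomial]
      split_ifs with he
      · subst he; simp [h]
      · simp
    · have hX : (X i : R3) = monomial (Finsupp.single i 1) 1 := by
        rw [← pow_one (X i : R3), X_pow_eq_monomial]
      have hs : Finsupp.single i 1 + (s - Finsupp.single i 1) = s := by
        ext j
        by_cases hj : j = i
        · subst hj; simp [Finsupp.single_apply, Finsupp.tsub_apply]; omega
        · simp [Finsupp.single_apply, Finsupp.tsub_apply, Ne.symm hj, hj]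
      rw [hX, monomial_mul, one_mul, hs, coeff_monomial, coeff_monomial]
      split_ifs with he
      · subst he; ring
      · ring

lemma exists_X_mul (i : Fin 3) (a : R3) (h : ∀ μ : Fin 3 →₀ ℕ, μ i = 0 → coeff μ a = 0) :
    ∃ g : R3, a = X i * g := by
  refine ⟨a.divMonomial (Finsupp.single i 1), ?_⟩
  have hmod : a.modMonomial (Finsupp.single i 1) = 0 := by
    ext μ
    by_cases hle : Finsupp.single i 1 ≤ μ
    · rw [coeff_modMonomial_of_le _ hle, coeff_zero]
    · rw [coeff_modMonomial_of_not_le _ hle, coeff_zero]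
      apply h
      by_contra hne
      exact hle (by
        intro j
        by_cases hj : j = i
        · subst hj; simp [Finsupp.single_apply]; omega
        · simp [Finsupp.single_apply, Ne.symm hj])
  conv_lhs => rw [← divMonomial_add_modMonomial_single a i]
  rw [hmod, add_zero]

lemma weight_one_apply (μ : Fin 3 →₀ ℕ) :
    (Finsupp.weight (1 : Fin 3 → ℕ)) μ = μ 0 + μ 1 + μ 2 := by
  rw [Finsupp.weight_apply, Finsupp.sum_fintype _ _ (by intro i; simp)]
  simp [Fin.sum_univ_three]

lemma homog_of_X_mul (i : Fin 3) (g : R3) (n : ℕ)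
    (h : (X i * g).IsHomogeneous (n + 1)) : g.IsHomogeneous n := by
  intro μ hμ
  have h2 : coeff (Finsupp.single i 1 + μ) (X i * g) ≠ 0 := by
    rwa [coeff_X_mul]
  have h3 := h h2
  rw [weight_one_apply] at h3
  rw [weight_one_apply]
  simp only [Finsupp.add_apply, Finsupp.single_apply] at h3
  fin_cases i <;> simp_all <;> omega

lemma key_lemma (P Q : R3) (u : Fin 3 →₀ ℕ) (k : ℕ) (hu : u 1 = 0)
    (hP : ∀ μ ∈ P.support, μ 1 < k)
    (h : P * monomial u 1 + Q * monomial (Finsupp.single 1 k) 1 = 0) :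
    P = 0 ∧ Q = 0 := by
  have hP0 : P = 0 := by
    ext μ
    rw [coeff_zero]
    by_contra hc
    have hμ : μ ∈ P.support := MvPolynomial.mem_support_iff.mpr hc
    have h1 : coeff (μ + u) (P * monomial u 1) = coeff μ P := by
      rw [coeff_mul_monomial, mul_one]
    have h2 : P * monomial u 1 = -(Q * monomial (Finsupp.single 1 k) 1) := by
      rw [eq_neg_iff_add_eq_zero]; exact h
    rw [h2, coeff_neg, coeff_mul_monomial'] at h1
    have hnle : ¬ Finsupp.single 1 k ≤ μ + u := by
      intro hle
      have := hle 1
      simp [Finsupp.single_apply, hu] at this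
      exact absurd this (by have := hP μ hμ; omega)
    rw [if_neg hnle, neg_zero] at h1
    exact hc h1.symm
  refine ⟨hP0, ?_⟩
  rw [hP0, zero_mul, zero_add] at h
  rcases mul_eq_zero.mp h with h' | h'
  · exact h'
  · exact absurd (MvPolynomial.monomial_eq_zero.mp h') one_ne_zero

lemma fs_ext {μ ν : Fin 3 →₀ ℕ} (h0 : μ 0 = ν 0) (h1 : μ 1 = ν 1) (h2 : μ 2 = ν 2) : μ = ν := by
  ext j; fin_cases j <;> assumption

noncomputable def uu (m : ℕ) : Fin 3 →₀ ℕ := Finsupp.single 0 (m-1) + Finsupp.single 2 (m-1)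

lemma uu_apply (m : ℕ) : ∀ j : Fin 3, uu m j = if j = 1 then 0 else m - 1 := by
  intro j; fin_cases j <;> simp [uu, Finsupp.single_apply]

lemma X_eq_mono (i : Fin 3) : (X i : R3) = monomial (Finsupp.single i 1) 1 := by
  rw [← pow_one (X i : R3), X_pow_eq_monomial]

lemma feven_eq (m : ℕ) : ((X 0 * X 2) ^ m + X 1 ^ (2*m) : R3)
    = monomial (Finsupp.single 0 m + Finsupp.single 2 m) 1
      + monomial (Finsupp.single 1 (2*m)) 1 := by
  rw [mul_pow, X_pow_eq_monomial, X_pow_eq_monomial, X_pow_eq_monomial, monomial_mul, one_mul]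

lemma fodd_eq (m : ℕ) : (X 1 * ((X 0 * X 2) ^ m + X 1 ^ (2*m)) : R3)
    = monomial (Finsupp.single 1 1 + (Finsupp.single 0 m + Finsupp.single 2 m)) 1
      + monomial (Finsupp.single 1 (2*m+1)) 1 := by
  rw [feven_eq, mul_add, X_eq_mono 1, monomial_mul, monomial_mul, one_mul]
  congr 1
  rw [Finsupp.single_add, add_comm]

lemma pderiv_feven_0 (m : ℕ) (hm : 1 ≤ m) :
    pderiv 0 (((X 0 * X 2) ^ m + X 1 ^ (2*m) : R3))
    = (m : ℂ) • (X 2 * monomial (uu m) 1) := by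
  rw [feven_eq, map_add, pderiv_monomial, pderiv_monomial, X_eq_mono 2, monomial_mul, one_mul,
    smul_monomial]
  have e1 : (Finsupp.single 1 (2*m) : Fin 3 →₀ ℕ) 0 = 0 := by simp
  have e2 : (Finsupp.single 0 m + Finsupp.single 2 m : Fin 3 →₀ ℕ) 0 = m := by
    simp [Finsupp.single_apply]
  rw [e1, e2]
  have : ((Finsupp.single 0 m + Finsupp.single 2 m) - Finsupp.single 0 1 : Fin 3 →₀ ℕ)
      = Finsupp.single 2 1 + uu m := by
    apply fs_ext <;> simp [Finsupp.single_apply, Finsupp.tsub_apply, uu_apply] <;> omega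
  rw [this]
  simp

lemma pderiv_feven_2 (m : ℕ) (hm : 1 ≤ m) :
    pderiv 2 (((X 0 * X 2) ^ m + X 1 ^ (2*m) : R3))
    = (m : ℂ) • (X 0 * monomial (uu m) 1) := by
  rw [feven_eq, map_add, pderiv_monomial, pderiv_monomial, X_eq_mono 0, monomial_mul, one_mul,
    smul_monomial]
  have e1 : (Finsupp.single 1 (2*m) : Fin 3 →₀ ℕ) 2 = 0 := by simp
  have e2 : (Finsupp.single 0 m + Finsupp.single 2 m : Fin 3 →₀ ℕ) 2 = m := by
    simp [Finsupp.single_apply]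
  rw [e1, e2]
  have : ((Finsupp.single 0 m + Finsupp.single 2 m) - Finsupp.single 2 1 : Fin 3 →₀ ℕ)
      = Finsupp.single 0 1 + uu m := by
    apply fs_ext <;> simp [Finsupp.single_apply, Finsupp.tsub_apply, uu_apply] <;> omega
  rw [this]
  simp

lemma pderiv_feven_1 (m : ℕ) (hm : 1 ≤ m) :
    pderiv 1 (((X 0 * X 2) ^ m + X 1 ^ (2*m) : R3))
    = ((2*m : ℕ) : ℂ) • monomial (Finsupp.single 1 (2*m-1)) 1 := by
  rw [feven_eq, map_add, pderiv_monomial, pderiv_monomial, smul_monomial]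
  have e1 : (Finsupp.single 0 m + Finsupp.single 2 m : Fin 3 →₀ ℕ) 1 = 0 := by
    simp [Finsupp.single_apply]
  have e2 : (Finsupp.single 1 (2*m) : Fin 3 →₀ ℕ) 1 = 2*m := by simp
  rw [e1, e2]
  have : ((Finsupp.single 1 (2*m)) - Finsupp.single 1 1 : Fin 3 →₀ ℕ)
      = Finsupp.single 1 (2*m-1) := by
    apply fs_ext <;> simp [Finsupp.single_apply, Finsupp.tsub_apply]
  rw [this]
  simp


lemma pderiv_fodd_0 (m : ℕ) (hm : 1 ≤ m) :
    pderiv 0 ((X 1 * ((X 0 * X 2) ^ m + X 1 ^ (2*m)) : R3))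
    = (m : ℂ) • (X 1 * X 2 * monomial (uu m) 1) := by
  rw [fodd_eq, map_add, pderiv_monomial, pderiv_monomial, X_eq_mono 1, X_eq_mono 2,
    monomial_mul, monomial_mul, one_mul, one_mul, smul_monomial]
  have e1 : (Finsupp.single 1 (2*m+1) : Fin 3 →₀ ℕ) 0 = 0 := by simp
  have e2 : (Finsupp.single 1 1 + (Finsupp.single 0 m + Finsupp.single 2 m) : Fin 3 →₀ ℕ) 0
      = m := by simp [Finsupp.single_apply]
  rw [e1, e2]
  have : ((Finsupp.single 1 1 + (Finsupp.single 0 m + Finsupp.single 2 m))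
        - Finsupp.single 0 1 : Fin 3 →₀ ℕ)
      = Finsupp.single 1 1 + Finsupp.single 2 1 + uu m := by
    apply fs_ext <;> simp [Finsupp.single_apply, Finsupp.tsub_apply, uu_apply] <;> omega
  rw [this]
  simp

lemma pderiv_fodd_2 (m : ℕ) (hm : 1 ≤ m) :
    pderiv 2 ((X 1 * ((X 0 * X 2) ^ m + X 1 ^ (2*m)) : R3))
    = (m : ℂ) • (X 1 * X 0 * monomial (uu m) 1) := by
  rw [fodd_eq, map_add, pderiv_monomial, pderiv_monomial, X_eq_mono 1, X_eq_mono 0,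
    monomial_mul, monomial_mul, one_mul, one_mul, smul_monomial]
  have e1 : (Finsupp.single 1 (2*m+1) : Fin 3 →₀ ℕ) 2 = 0 := by simp
  have e2 : (Finsupp.single 1 1 + (Finsupp.single 0 m + Finsupp.single 2 m) : Fin 3 →₀ ℕ) 2
      = m := by simp [Finsupp.single_apply]
  rw [e1, e2]
  have : ((Finsupp.single 1 1 + (Finsupp.single 0 m + Finsupp.single 2 m))
        - Finsupp.single 2 1 : Fin 3 →₀ ℕ)
      = Finsupp.single 1 1 + Finsupp.single 0 1 + uu m := by
    apply fs_ext <;> simp [Finsupp.single_apply, Finsupp.tsub_apply, uu_apply] <;> omega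
  rw [this]
  simp

lemma pderiv_fodd_1 (m : ℕ) (hm : 1 ≤ m) :
    pderiv 1 ((X 1 * ((X 0 * X 2) ^ m + X 1 ^ (2*m)) : R3))
    = (X 0 * X 2) * monomial (uu m) 1
      + ((2*m+1 : ℕ) : ℂ) • monomial (Finsupp.single 1 (2*m)) 1 := by
  rw [fodd_eq, map_add, pderiv_monomial, pderiv_monomial, X_eq_mono 0, X_eq_mono 2,
    monomial_mul, monomial_mul, one_mul, one_mul, smul_monomial]
  have e1 : (Finsupp.single 1 (2*m+1) : Fin 3 →₀ ℕ) 1 = 2*m+1 := by simp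
  have e2 : (Finsupp.single 1 1 + (Finsupp.single 0 m + Finsupp.single 2 m) : Fin 3 →₀ ℕ) 1
      = 1 := by simp [Finsupp.single_apply]
  rw [e1, e2]
  have h1 : ((Finsupp.single 1 1 + (Finsupp.single 0 m + Finsupp.single 2 m))
        - Finsupp.single 1 1 : Fin 3 →₀ ℕ)
      = Finsupp.single 0 1 + Finsupp.single 2 1 + uu m := by
    apply fs_ext <;> simp [Finsupp.single_apply, Finsupp.tsub_apply, uu_apply] <;> omega
  have h2 : ((Finsupp.single 1 (2*m+1)) - Finsupp.single 1 1 : Fin 3 →₀ ℕ)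
      = Finsupp.single 1 (2*m) := by
    apply fs_ext <;> simp [Finsupp.single_apply, Finsupp.tsub_apply]
  rw [h1, h2]
  simp


lemma homog_degreeOf1_le {p : R3} {j : ℕ} (hp : p.IsHomogeneous j) : degreeOf 1 p ≤ j := by
  rw [degreeOf_le_iff]
  intro μ hμ
  have := hp (MvPolynomial.mem_support_iff.mp hμ)
  rw [weight_one_apply] at this
  omega

lemma jacC_expand (f : MvPolynomial (Fin 3) ℂ) (v : Fin 3 → R3) :
    jacC f v = v 0 * pderiv 0 f + v 1 * pderiv 1 f + v 2 * pderiv 2 f := by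
  show ∑ i, v i * pderiv i f = _
  rw [Fin.sum_univ_three]

lemma divC_expand (v : Fin 3 → R3) :
    divC v = pderiv 0 (v 0) + pderiv 1 (v 1) + pderiv 2 (v 2) := by
  show ∑ i, pderiv i (v i) = _
  rw [Fin.sum_univ_three]

lemma evenA (m j : ℕ) (hm : 2 ≤ m) (hj : j ≤ 2*m-3) (v : Fin 3 → R3)
    (hv : ∀ i, (v i).IsHomogeneous j)
    (hker : jacC ((X 0 * X 2)^m + X 1^(2*m)) v = 0) :
    v 1 = 0 ∧ v 0 * X 2 + v 2 * X 0 = 0 := by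
  set P : R3 := C (m:ℂ) * (v 0 * X 2 + v 2 * X 0) with hPdef
  set Q : R3 := C ((2*m:ℕ):ℂ) * v 1 with hQdef
  have heq : P * monomial (uu m) 1 + Q * monomial (Finsupp.single 1 (2*m-1)) 1 = 0 := by
    rw [← hker, jacC_expand, pderiv_feven_0 m (by omega), pderiv_feven_1 m (by omega),
      pderiv_feven_2 m (by omega), smul_eq_C_mul, smul_eq_C_mul, smul_eq_C_mul, hPdef, hQdef]
    ring
  have hP : ∀ μ ∈ P.support, μ 1 < 2*m-1 := by
    intro μ hμ
    have h1 : μ 1 ≤ degreeOf 1 P := by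
      rw [degreeOf_eq_sup]; exact Finset.le_sup (f := fun ν : Fin 3 →₀ ℕ => ν 1) hμ
    have hX2 : degreeOf 1 (X 2 : R3) = 0 := by
      rw [degreeOf_X]; simp [(by decide : ¬(1:Fin 3) = 2), (by decide : ¬(1:Fin 3) = 0)]
    have hX0 : degreeOf 1 (X 0 : R3) = 0 := by
      rw [degreeOf_X]; simp [(by decide : ¬(1:Fin 3) = 2), (by decide : ¬(1:Fin 3) = 0)]
    have h2 : degreeOf 1 P ≤ j := by
      refine le_trans (degreeOf_mul_le _ _ _) ?_
      rw [degreeOf_C, zero_add]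
      refine le_trans (degreeOf_add_le _ _ _) (max_le ?_ ?_)
      · refine le_trans (degreeOf_mul_le _ _ _) ?_
        rw [hX2, add_zero]; exact homog_degreeOf1_le (hv 0)
      · refine le_trans (degreeOf_mul_le _ _ _) ?_
        rw [hX0, add_zero]; exact homog_degreeOf1_le (hv 2)
    omega
  obtain ⟨hP0, hQ0⟩ := key_lemma P Q (uu m) (2*m-1) (by simp [uu_apply]) hP heq
  constructor
  · rw [hQdef] at hQ0
    rcases mul_eq_zero.mp hQ0 with h | h
    · exfalso
      have h2 : (2*m:ℕ) = 0 := by exact_mod_cast C_eq_zero.mp h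
      omega
    · exact h
  · rw [hPdef] at hP0
    rcases mul_eq_zero.mp hP0 with h | h
    · exfalso
      have h2 : (m:ℕ) = 0 := by exact_mod_cast C_eq_zero.mp h
      omega
    · exact h

lemma oddA (m j : ℕ) (hm : 1 ≤ m) (hj : j ≤ 2*m-2) (hj1 : 1 ≤ j) (v : Fin 3 → R3)
    (hv : ∀ i, (v i).IsHomogeneous j)
    (hker : jacC (X 1 * ((X 0 * X 2)^m + X 1^(2*m))) v = 0) :
    v 1 = 0 ∧ v 0 * X 2 + v 2 * X 0 = 0 := by
  set P : R3 := C (m:ℂ) * (X 1 * (v 0 * X 2 + v 2 * X 0)) + v 1 * (X 0 * X 2) with hPdef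
  set Q : R3 := C ((2*m+1:ℕ):ℂ) * v 1 with hQdef
  have heq : P * monomial (uu m) 1 + Q * monomial (Finsupp.single 1 (2*m)) 1 = 0 := by
    rw [← hker, jacC_expand, pderiv_fodd_0 m hm, pderiv_fodd_1 m hm,
      pderiv_fodd_2 m hm, smul_eq_C_mul, smul_eq_C_mul, smul_eq_C_mul, hPdef, hQdef]
    ring
  have hX2 : degreeOf 1 (X 2 : R3) = 0 := by
    rw [degreeOf_X]; simp [(by decide : ¬(1:Fin 3) = 2)]
  have hX0 : degreeOf 1 (X 0 : R3) = 0 := by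
    rw [degreeOf_X]; simp [(by decide : ¬(1:Fin 3) = 0)]
  have hX1 : degreeOf 1 (X 1 : R3) = 1 := by
    rw [degreeOf_X]; simp
  have hP : ∀ μ ∈ P.support, μ 1 < 2*m := by
    intro μ hμ
    have h1 : μ 1 ≤ degreeOf 1 P := by
      rw [degreeOf_eq_sup]; exact Finset.le_sup (f := fun ν : Fin 3 →₀ ℕ => ν 1) hμ
    have h2 : degreeOf 1 P ≤ j + 1 := by
      refine le_trans (degreeOf_add_le _ _ _) (max_le ?_ ?_)
      · refine le_trans (degreeOf_mul_le _ _ _) ?_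
        rw [degreeOf_C, zero_add]
        refine le_trans (degreeOf_mul_le _ _ _) ?_
        rw [hX1]
        have : degreeOf 1 (v 0 * X 2 + v 2 * X 0) ≤ j := by
          refine le_trans (degreeOf_add_le _ _ _) (max_le ?_ ?_)
          · refine le_trans (degreeOf_mul_le _ _ _) ?_
            rw [hX2, add_zero]; exact homog_degreeOf1_le (hv 0)
          · refine le_trans (degreeOf_mul_le _ _ _) ?_
            rw [hX0, add_zero]; exact homog_degreeOf1_le (hv 2)
        omega
      · refine le_trans (degreeOf_mul_le _ _ _) ?_
        have hx02 : degreeOf 1 ((X 0 : R3) * X 2) ≤ 0 := by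
          refine le_trans (degreeOf_mul_le _ _ _) ?_
          rw [hX0, hX2]
        have := homog_degreeOf1_le (hv 1)
        omega
    omega
  obtain ⟨hP0, hQ0⟩ := key_lemma P Q (uu m) (2*m) (by simp [uu_apply]) hP heq
  have hv1 : v 1 = 0 := by
    rw [hQdef] at hQ0
    rcases mul_eq_zero.mp hQ0 with h | h
    · exfalso
      have h2 : (2*m+1:ℕ) = 0 := by exact_mod_cast C_eq_zero.mp h
      omega
    · exact h
  refine ⟨hv1, ?_⟩
  rw [hPdef, hv1, zero_mul, add_zero] at hP0
  rcases mul_eq_zero.mp hP0 with h | h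
  · exfalso
    have h2 : (m:ℕ) = 0 := by exact_mod_cast C_eq_zero.mp h
    omega
  · rcases mul_eq_zero.mp h with h1 | h1
    · exact absurd h1 (X_ne_zero 1)
    · exact h1


noncomputable def Dop : R3 →ₗ[ℂ] R3 where
  toFun g := X 0 * pderiv 0 g - X 2 * pderiv 2 g
  map_add' a b := by simp [mul_add]; ring
  map_smul' c a := by simp [smul_sub]

noncomputable def Phi : R3 →ₗ[ℂ] (Fin 3 → R3) where
  toFun g := ![X 0 * g, 0, -(X 2 * g)]
  map_add' a b := by
    funext i; fin_cases i <;> simp [mul_add] <;> ring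
  map_smul' c a := by
    funext i; fin_cases i <;> simp [mul_smul_comm]

lemma Phi_apply (g : R3) : Phi g = ![X 0 * g, 0, -(X 2 * g)] := rfl

lemma key_id_even (m : ℕ) (hm : 1 ≤ m) :
    (X 0 : R3) * pderiv 0 ((X 0 * X 2)^m + X 1^(2*m) : R3)
      = X 2 * pderiv 2 ((X 0 * X 2)^m + X 1^(2*m) : R3) := by
  rw [pderiv_feven_0 m hm, pderiv_feven_2 m hm, smul_eq_C_mul, smul_eq_C_mul]
  ring

lemma key_id_odd (m : ℕ) (hm : 1 ≤ m) :
    (X 0 : R3) * pderiv 0 (X 1 * ((X 0 * X 2)^m + X 1^(2*m)) : R3)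
      = X 2 * pderiv 2 (X 1 * ((X 0 * X 2)^m + X 1^(2*m)) : R3) := by
  rw [pderiv_fodd_0 m hm, pderiv_fodd_2 m hm, smul_eq_C_mul, smul_eq_C_mul]
  ring

lemma V_eq_map (f : R3) (n : ℕ)
    (hkey : (X 0 : R3) * pderiv 0 f = X 2 * pderiv 2 f)
    (hA : ∀ v : Fin 3 → R3, (∀ i, (v i).IsHomogeneous (n+1)) → jacC f v = 0 →
       v 1 = 0 ∧ v 0 * X 2 + v 2 * X 0 = 0) :
    V f (n+1) = Submodule.map Phi
      (homogeneousSubmodule (Fin 3) ℂ n ⊓ LinearMap.ker Dop) := by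
  ext v
  constructor
  · rintro ⟨⟨hhom, hjac⟩, hdiv⟩
    simp only [SetLike.mem_coe] at hhom hjac hdiv
    rw [Submodule.mem_pi] at hhom
    rw [LinearMap.mem_ker] at hjac hdiv
    have hv : ∀ i, (v i).IsHomogeneous (n+1) := fun i => hhom i (Set.mem_univ i)
    obtain ⟨hb, hrel⟩ := hA v hv hjac
    have hcoeff : ∀ μ : Fin 3 →₀ ℕ, μ 0 = 0 → coeff μ (v 0) = 0 := by
      intro μ h0
      have e1 : coeff (μ + Finsupp.single 2 1) (v 0 * X 2) = coeff μ (v 0) :=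
        coeff_mul_X _ _ _
      have e2 : v 0 * X 2 = -(v 2 * X 0) := by linear_combination hrel
      rw [e2, coeff_neg, coeff_mul_X'] at e1
      rw [← e1]
      have : (0 : Fin 3) ∉ (μ + Finsupp.single 2 1).support := by
        simp [Finsupp.mem_support_iff, h0, Finsupp.single_apply]
      rw [if_neg this, neg_zero]
    obtain ⟨g, hg⟩ := exists_X_mul 0 (v 0) hcoeff
    have hv2 : v 2 = -(X 2 * g) := by
      have h1 : (X 0 : R3) * (X 2 * g + v 2) = 0 := by
        rw [hg] at hrel; linear_combination hrel
      rcases mul_eq_zero.mp h1 with h | h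
      · exact absurd h (X_ne_zero 0)
      · linear_combination h
    refine ⟨g, ⟨?_, ?_⟩, ?_⟩
    · show g ∈ homogeneousSubmodule (Fin 3) ℂ n
      rw [mem_homogeneousSubmodule]
      exact homog_of_X_mul 0 g n (hg ▸ hv 0)
    · show g ∈ LinearMap.ker Dop
      rw [LinearMap.mem_ker]
      have hD : divC v = Dop g := by
        rw [divC_expand, hg, hb, hv2]
        show _ = X 0 * pderiv 0 g - X 2 * pderiv 2 g
        simp only [pderiv_mul, pderiv_X_self, map_zero, map_neg]
        ring
      rw [← hD, hdiv]
    · rw [Phi_apply]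
      funext i
      fin_cases i <;> simp [hg, hb, hv2]
  · rintro ⟨g, ⟨hghom, hgker⟩, rfl⟩
    simp only [SetLike.mem_coe] at hghom hgker
    rw [mem_homogeneousSubmodule] at hghom
    rw [LinearMap.mem_ker] at hgker
    have hDg : (X 0 : R3) * pderiv 0 g - X 2 * pderiv 2 g = 0 := hgker
    refine ⟨⟨?_, ?_⟩, ?_⟩
    · simp only [SetLike.mem_coe]
      rw [Submodule.mem_pi]
      intro i _
      rw [mem_homogeneousSubmodule]
      fin_cases i
      · show ((X 0 : R3) * g).IsHomogeneous (n+1)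
        simpa [add_comm] using (isHomogeneous_X ℂ (0 : Fin 3)).mul hghom
      · show (0 : R3).IsHomogeneous (n+1)
        exact isHomogeneous_zero _ _ _
      · show (-(X 2 * g) : R3).IsHomogeneous (n+1)
        exact (by simpa [add_comm] using (isHomogeneous_X ℂ (2 : Fin 3)).mul hghom :
          ((X 2 : R3) * g).IsHomogeneous (n+1)).neg
    · simp only [SetLike.mem_coe]
      rw [LinearMap.mem_ker, jacC_expand, Phi_apply]
      show X 0 * g * pderiv 0 f + 0 * pderiv 1 f + -(X 2 * g) * pderiv 2 f = 0
      linear_combination g * hkey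
    · simp only [SetLike.mem_coe]
      rw [LinearMap.mem_ker, divC_expand, Phi_apply]
      show pderiv 0 (X 0 * g) + pderiv 1 0 + pderiv 2 (-(X 2 * g)) = 0
      simp only [pderiv_mul, pderiv_X_self, map_zero, map_neg]
      linear_combination hDg


noncomputable def mono3 (n α : ℕ) : Fin 3 →₀ ℕ :=
  Finsupp.single 0 α + Finsupp.single 1 (n - 2*α) + Finsupp.single 2 α

lemma mono3_0 (n α : ℕ) : mono3 n α 0 = α := by simp [mono3, Finsupp.single_apply]
lemma mono3_1 (n α : ℕ) : mono3 n α 1 = n - 2*α := by simp [mono3, Finsupp.single_apply]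
lemma mono3_2 (n α : ℕ) : mono3 n α 2 = α := by simp [mono3, Finsupp.single_apply]

lemma Dop_apply (g : R3) : Dop g = X 0 * pderiv 0 g - X 2 * pderiv 2 g := rfl

lemma W_rank (n : ℕ) :
    Module.finrank ℂ
      ((homogeneousSubmodule (Fin 3) ℂ n ⊓ LinearMap.ker Dop : Submodule ℂ R3))
      = n/2 + 1 := by
  have hli : LinearIndependent ℂ
      (fun α : Fin (n/2+1) => (monomial (mono3 n (α : ℕ)) 1 : R3)) := by
    have hb := (basisMonomials (Fin 3) ℂ).linearIndependent
    rw [coe_basisMonomials] at hb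
    have hinj : Function.Injective (fun α : Fin (n/2+1) => mono3 n (α : ℕ)) := by
      intro α β h
      have h' : mono3 n (α : ℕ) = mono3 n (β : ℕ) := h
      have : mono3 n (α : ℕ) 0 = mono3 n (β : ℕ) 0 := by rw [h']
      rw [mono3_0, mono3_0] at this
      exact Fin.ext this
    exact hb.comp _ hinj
  have hspan : (homogeneousSubmodule (Fin 3) ℂ n ⊓ LinearMap.ker Dop : Submodule ℂ R3)
      = Submodule.span ℂ
        (Set.range fun α : Fin (n/2+1) => (monomial (mono3 n (α : ℕ)) 1 : R3)) := by
    apply le_antisymm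
    · intro g hg
      obtain ⟨hh, hk⟩ := hg
      simp only [SetLike.mem_coe, mem_homogeneousSubmodule] at hh
      simp only [SetLike.mem_coe, LinearMap.mem_ker] at hk
      rw [← support_sum_monomial_coeff g]
      apply Submodule.sum_mem
      intro μ hμ
      have hc : coeff μ g ≠ 0 := MvPolynomial.mem_support_iff.mp hμ
      have hdeg : μ 0 + μ 1 + μ 2 = n := by
        have := hh hc
        rwa [weight_one_apply] at this
      have h02 : μ 0 = μ 2 := by
        have hz : coeff μ (Dop g) = 0 := by rw [hk, coeff_zero]
        rw [Dop_apply, coeff_sub, euler_coeff, euler_coeff] at hz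
        have : ((μ 0 : ℂ) - (μ 2 : ℂ)) * coeff μ g = 0 := by linear_combination hz
        rcases mul_eq_zero.mp this with h | h
        · exact_mod_cast sub_eq_zero.mp h
        · exact absurd h hc
      have hα : μ 0 < n/2 + 1 := by omega
      have hμeq : μ = mono3 n (μ 0) := by
        apply fs_ext
        · rw [mono3_0]
        · rw [mono3_1]; omega
        · rw [mono3_2]; omega
      have : monomial μ (coeff μ g) = coeff μ g • (monomial (mono3 n (μ 0)) 1 : R3) := by
        rw [smul_monomial, smul_eq_mul, mul_one, ← hμeq]
      rw [this]
      exact Submodule.smul_mem _ _ (Submodule.subset_span ⟨⟨μ 0, hα⟩, rfl⟩)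
    · rw [Submodule.span_le]
      rintro _ ⟨α, rfl⟩
      have h2α : 2 * (α : ℕ) ≤ n := by
        have := α.2
        omega
      constructor
      · simp only [SetLike.mem_coe, mem_homogeneousSubmodule]
        apply isHomogeneous_monomial
        rw [Finsupp.degree_eq_weight_one, show (fun _ => 1 : Fin 3 → ℕ) = 1 from rfl, weight_one_apply, mono3_0, mono3_1, mono3_2]
        omega
      · simp only [SetLike.mem_coe, LinearMap.mem_ker]
        ext μ
        rw [Dop_apply, coeff_sub, euler_coeff, euler_coeff, coeff_zero]
        by_cases hμ : μ = mono3 n (α : ℕ)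
        · subst hμ
          rw [mono3_0, mono3_2]
          ring
        · rw [coeff_monomial, if_neg (by exact fun h => hμ h.symm)]
          ring
  rw [hspan, finrank_span_eq_card hli, Fintype.card_fin]


theorem stmt19 (d m : ℕ) (f : MvPolynomial (Fin 3) ℂ) (hd : 3 ≤ d)
    (hf : (d = 2 * m ∧ 2 ≤ m ∧ f = (X 0 * X 2) ^ m + X 1 ^ (2 * m)) ∨
          (d = 2 * m + 1 ∧ 1 ≤ m ∧ f = X 1 * ((X 0 * X 2) ^ m + X 1 ^ (2 * m)))) :
    ∀ j : ℕ, 1 ≤ j → j ≤ d - 3 → Module.finrank ℂ (V f j) = (j + 1) / 2 := by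
  intro j hj1 hj3
  obtain ⟨n, rfl⟩ : ∃ n, j = n + 1 := ⟨j - 1, by omega⟩
  have hinj : Function.Injective (Phi : R3 →ₗ[ℂ] (Fin 3 → R3)) := by
    intro g g' h
    have h0 : Phi g 0 = Phi g' 0 := by rw [h]
    rw [Phi_apply, Phi_apply] at h0
    simp only [Matrix.cons_val_zero] at h0
    exact mul_left_cancel₀ (X_ne_zero 0) h0
  have hfin : ∀ (hkey : (X 0 : R3) * pderiv 0 f = X 2 * pderiv 2 f)
      (hA : ∀ v : Fin 3 → R3, (∀ i, (v i).IsHomogeneous (n+1)) → jacC f v = 0 →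
        v 1 = 0 ∧ v 0 * X 2 + v 2 * X 0 = 0),
      Module.finrank ℂ (V f (n+1)) = (n + 1 + 1) / 2 := by
    intro hkey hA
    rw [V_eq_map f n hkey hA,
      ← LinearEquiv.finrank_eq (Submodule.equivMapOfInjective Phi hinj
        (homogeneousSubmodule (Fin 3) ℂ n ⊓ LinearMap.ker Dop)), W_rank]
    omega
  rcases hf with ⟨hdm, hm, hfeq⟩ | ⟨hdm, hm, hfeq⟩
  · subst hfeq
    exact hfin (key_id_even m (by omega))
      (fun v hv hk => evenA m (n+1) hm (by omega) v hv hk)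
  · subst hfeq
    exact hfin (key_id_odd m (by omega))
      (fun v hv hk => oddA m (n+1) hm (by omega) (by omega) v hv hk)
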